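/- For every real α ≥ 2 there exists a constant C_α > 0 such that for all real x and y: |x+y|^α ≥ |x|^α + α·|x|^{α-2}·x·y + C_α·|y|^α (with the convention that |x|^{α-2}·x = 0 when x = 0). -/

import Mathlib

open Real Set Filter

lemma aux_superadd {p : ℝ} (hp : 1 ≤ p) {a b : ℝ} (ha : 0 ≤ a) (hb : 0 ≤ b) :
    a ^ p + b ^ p ≤ (a + b) ^ p := by
  have h := NNReal.coe_le_coe.2 (NNReal.add_rpow_le_rpow_add a.toNNReal b.toNNReal hp)
  push_cast [Real.coe_toNNReal a ha, Real.coe_toNNReal b hb] at h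
  exact h

lemma aux_two {p : ℝ} (hp : 1 ≤ p) {a b : ℝ} (ha : 0 ≤ a) (hb : 0 ≤ b) :
    (a + b) ^ p ≤ 2 ^ (p - 1) * (a ^ p + b ^ p) := by
  have h := NNReal.coe_le_coe.2 (NNReal.rpow_add_le_mul_rpow_add_rpow a.toNNReal b.toNNReal hp)
  push_cast [Real.coe_toNNReal a ha, Real.coe_toNNReal b hb] at h
  exact h

lemma g_nonneg_eq {α : ℝ} (hα : 2 ≤ α) {s : ℝ} (hs : 0 ≤ s) :
    |s| ^ (α - 2) * s = s ^ (α - 1) := by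
  rcases eq_or_lt_of_le hs with h | h
  · rw [← h, abs_zero, mul_zero, Real.zero_rpow (by linarith : α - 1 ≠ 0)]
  · rw [abs_of_pos h, show α - 1 = (α - 2) + 1 by ring, Real.rpow_add_one (ne_of_gt h)]

lemma main_half (α : ℝ) (hα : 2 ≤ α) (x : ℝ) (hx : 0 ≤ x) (y : ℝ) :
    |x| ^ α + α * (|x| ^ (α - 2) * x) * y + (2:ℝ) ^ (1 - α) * |y| ^ α ≤ |x + y| ^ α := by
  set c : ℝ := (2:ℝ) ^ (1 - α) with hc
  have hβ : (1:ℝ) ≤ α - 1 := by linarith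
  have hc_pos : 0 < c := Real.rpow_pos_of_pos (by norm_num) _
  have hc_le : c ≤ 1 := Real.rpow_le_one_of_one_le_of_nonpos (by norm_num) (by linarith)
  set ψ : ℝ → ℝ := fun y => |x + y| ^ α - |x| ^ α - α * (|x| ^ (α - 2) * x) * y - c * |y| ^ α
    with hψdef
  have hαpos : (0:ℝ) < α := by linarith
  -- derivative of ψ
  have hD : ∀ y : ℝ, HasDerivAt ψ
      (α * (|x + y| ^ (α - 2) * (x + y)) - α * (|x| ^ (α - 2) * x)
        - c * (α * (|y| ^ (α - 2) * y))) y := by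
    intro y
    have h1 : HasDerivAt (fun y : ℝ => |x + y| ^ α) (α * (|x + y| ^ (α - 2) * (x + y))) y := by
      have hadd : HasDerivAt (fun y : ℝ => x + y) 1 y := (hasDerivAt_id y).const_add x
      have := (hasDerivAt_abs_rpow (x + y) (by linarith : (1:ℝ) < α)).comp y hadd
      simpa [mul_assoc, Function.comp_def] using this
    have h2 : HasDerivAt (fun y : ℝ => |y| ^ α) (α * (|y| ^ (α - 2) * y)) y := by
      have := hasDerivAt_abs_rpow y (by linarith : (1:ℝ) < α)
      simpa [mul_assoc] using this
    have h3 : HasDerivAt (fun y : ℝ => α * (|x| ^ (α - 2) * x) * y)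
        (α * (|x| ^ (α - 2) * x)) y := by
      simpa using (hasDerivAt_id y).const_mul (α * (|x| ^ (α - 2) * x))
    exact ((h1.sub_const (|x| ^ α)).sub h3).sub (h2.const_mul c)
  have hψ0 : ψ 0 = 0 := by
    simp [hψdef, Real.zero_rpow (ne_of_gt hαpos)]
  -- pointwise derivative sign, y > 0
  have hpos : ∀ y : ℝ, 0 < y →
      0 ≤ α * (|x + y| ^ (α - 2) * (x + y)) - α * (|x| ^ (α - 2) * x)
        - c * (α * (|y| ^ (α - 2) * y)) := by
    intro y hy
    rw [g_nonneg_eq hα hx, g_nonneg_eq hα (le_of_lt hy),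
      g_nonneg_eq hα (by linarith : (0:ℝ) ≤ x + y)]
    have h1 : c * y ^ (α - 1) ≤ y ^ (α - 1) := by
      nlinarith [Real.rpow_nonneg hy.le (α - 1)]
    have h2 : x ^ (α - 1) + y ^ (α - 1) ≤ (x + y) ^ (α - 1) :=
      aux_superadd hβ hx hy.le
    nlinarith
  -- pointwise derivative sign, y < 0
  have hneg : ∀ y : ℝ, y < 0 →
      α * (|x + y| ^ (α - 2) * (x + y)) - α * (|x| ^ (α - 2) * x)
        - c * (α * (|y| ^ (α - 2) * y)) ≤ 0 := by
    intro y hy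
    set t : ℝ := -y with ht
    have htpos : 0 < t := by simp [ht]; linarith
    have hgy : |y| ^ (α - 2) * y = -(t ^ (α - 1)) := by
      rw [show |y| = t by rw [abs_of_neg hy], show y = -t by simp [ht]]
      rw [← g_nonneg_eq hα htpos.le, abs_of_pos htpos]; ring
    rw [g_nonneg_eq hα hx, hgy]
    -- need : |x+y|^(α-2)*(x+y) + c*t^(α-1) ≤ x^(α-1)
    have key : |x + y| ^ (α - 2) * (x + y) + c * t ^ (α - 1) ≤ x ^ (α - 1) := by
      rcases le_or_gt 0 (x + y) with h | h
      · rw [g_nonneg_eq hα h]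
        have e1 : c * t ^ (α - 1) ≤ t ^ (α - 1) := by
          nlinarith [Real.rpow_nonneg htpos.le (α - 1)]
        have e2 : t ^ (α - 1) + (x + y) ^ (α - 1) ≤ x ^ (α - 1) := by
          have := aux_superadd hβ htpos.le h
          rwa [show t + (x + y) = x by rw [ht]; ring] at this
        linarith
      · have e0 : |x + y| ^ (α - 2) * (x + y) = -((t - x) ^ (α - 1)) := by
          rw [show |x + y| = t - x by rw [abs_of_neg h]; ring,
            show x + y = -(t - x) by rw [ht]; ring]
          rw [← g_nonneg_eq hα (by linarith : (0:ℝ) ≤ t - x), abs_of_nonneg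
            (by linarith : (0:ℝ) ≤ t - x)]
          ring
        rw [e0]
        -- need : c * t^(α-1) ≤ x^(α-1) + (t-x)^(α-1)
        have e1 : t ^ (α - 1) ≤ 2 ^ (α - 2) * (x ^ (α - 1) + (t - x) ^ (α - 1)) := by
          have := aux_two hβ hx (by linarith : (0:ℝ) ≤ t - x)
          rw [show x + (t - x) = t by ring, show α - 1 - 1 = α - 2 by ring] at this
          exact this
        have e2 : c * (2 ^ (α - 2) : ℝ) = 2⁻¹ := by
          rw [hc, ← Real.rpow_add (by norm_num : (0:ℝ) < 2),
            show 1 - α + (α - 2) = -1 by ring, Real.rpow_neg_one]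
        have e3 : 0 ≤ x ^ (α - 1) + (t - x) ^ (α - 1) :=
          add_nonneg (Real.rpow_nonneg hx _) (Real.rpow_nonneg (by linarith) _)
        nlinarith
    nlinarith
  -- monotonicity
  have hcont : Continuous ψ := by
    have : Differentiable ℝ ψ := fun y => (hD y).differentiableAt
    exact this.continuous
  have hmono : MonotoneOn ψ (Ici 0) := by
    apply monotoneOn_of_deriv_nonneg (convex_Ici 0) hcont.continuousOn
      (fun y _ => ((hD y).differentiableAt).differentiableWithinAt)
    intro y hy
    rw [interior_Ici] at hy
    rw [(hD y).deriv]
    exact hpos y hy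
  have hanti : AntitoneOn ψ (Iic 0) := by
    apply antitoneOn_of_deriv_nonpos (convex_Iic 0) hcont.continuousOn
      (fun y _ => ((hD y).differentiableAt).differentiableWithinAt)
    intro y hy
    rw [interior_Iic] at hy
    rw [(hD y).deriv]
    exact hneg y hy
  have hψy : 0 ≤ ψ y := by
    rcases le_or_gt 0 y with h | h
    · have := hmono (self_mem_Ici) h h
      rwa [hψ0] at this
    · have := hanti (h.le) (self_mem_Iic) h.le
      rwa [hψ0] at this
  have : ψ y = |x + y| ^ α - |x| ^ α - α * (|x| ^ (α - 2) * x) * y - c * |y| ^ α := rfl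
  linarith [hψy, this ▸ hψy]

theorem stmt6 (α : ℝ) (hα : 2 ≤ α) :
    ∃ C : ℝ, 0 < C ∧ ∀ x y : ℝ,
      |x| ^ α + α * (|x| ^ (α - 2) * x) * y + C * |y| ^ α ≤ |x + y| ^ α := by
  refine ⟨(2:ℝ) ^ (1 - α), Real.rpow_pos_of_pos (by norm_num) _, fun x y => ?_⟩
  rcases le_or_gt 0 x with hx | hx
  · exact main_half α hα x hx y
  · have h := main_half α hα (-x) (by linarith) (-y)
    rw [show (-x) + (-y) = -(x + y) by ring, abs_neg, abs_neg, abs_neg] at h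
    have e : α * (|x| ^ (α - 2) * -x) * -y = α * (|x| ^ (α - 2) * x) * y := by ring
    rw [e] at h
    exact h
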